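/- arXiv:2402.17609 — 3 statements merged into one kernel-verified Lean document; each statement's English description precedes it below -/
import Mathlib

section
/- For any N×N complex matrix B, ℓ > 0, and 2 ≤ p ≤ q ≤ ∞, one has |||B|||_{q,ℓ} ≤ C (1 + (Nℓ)^{(q-p)/(pq)}) |||B|||_{p,ℓ} for a universal constant C, with the convention (q-p)/(pq) = 1/p when q = ∞. -/
open Matrix MeasureTheory Asymptotics
open scoped ComplexOrder BigOperators

/-- Normalized trace `⟨M⟩ = N⁻¹ Tr M`. -/
noncomputable def ntr {N : ℕ} (M : Matrix (Fin N) (Fin N) ℂ) : ℂ :=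
  (N : ℂ)⁻¹ * M.trace

/-- `|A| = (A Aᴴ)^{1/2}`. -/
noncomputable def matAbs {N : ℕ} (A : Matrix (Fin N) (Fin N) ℂ) : Matrix (Fin N) (Fin N) ℂ :=
  (Matrix.posSemidef_self_mul_conjTranspose A).1.eigenvectorUnitary.1 *
    diagonal ((↑) ∘ (√·) ∘ (Matrix.posSemidef_self_mul_conjTranspose A).1.eigenvalues) *
    (star (Matrix.posSemidef_self_mul_conjTranspose A).1.eigenvectorUnitary : Matrix (Fin N) (Fin N) ℂ)

/-- Euclidean operator norm of a matrix. -/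
noncomputable def opNorm {N : ℕ} (A : Matrix (Fin N) (Fin N) ℂ) : ℝ :=
  ‖Matrix.toEuclideanCLM (𝕜 := ℂ) A‖

/-- Normalized `p`-th Schatten norm `⟨|A|^p⟩^{1/p}`. -/
noncomputable def schatten {N : ℕ} (p : ℕ) (A : Matrix (Fin N) (Fin N) ℂ) : ℝ :=
  (ntr (matAbs A ^ p)).re ^ ((p : ℝ)⁻¹)

/-- The `ℓ`-weighted `(2,p)`-Schatten norm, `p ∈ [2,∞]` (`p = ⊤` uses the operator norm). -/
noncomputable def wnorm {N : ℕ} (p : ℕ∞) (ℓ : ℝ) (A : Matrix (Fin N) (Fin N) ℂ) : ℝ :=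
  p.recTopCoe (schatten 2 A / ℓ ^ ((2:ℝ)⁻¹) + opNorm A)
    (fun q => schatten 2 A / ℓ ^ ((2:ℝ)⁻¹) + schatten q A / ℓ ^ ((q : ℝ)⁻¹))

/-- Resolvent `G(ζ) = (W - ζ)⁻¹`. -/
noncomputable def resOf {N : ℕ} (W : Matrix (Fin N) (Fin N) ℂ) (ζ : ℂ) :
    Matrix (Fin N) (Fin N) ℂ :=
  (W - ζ • (1 : Matrix (Fin N) (Fin N) ℂ))⁻¹

/-- `Im G = (G - Gᴴ)/(2i)`. -/
noncomputable def imPart {N : ℕ} (G : Matrix (Fin N) (Fin N) ℂ) : Matrix (Fin N) (Fin N) ℂ :=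
  (2 * Complex.I)⁻¹ • (G - Gᴴ)

/-- Bessel function of the first kind of order one (integral representation). -/
noncomputable def besselJ1 (x : ℝ) : ℝ :=
  (1 / Real.pi) * ∫ θ in (0:ℝ)..Real.pi, Real.cos (θ - x * Real.sin θ)

/-- Semicircle density on `[-2,2]`. -/
noncomputable def rhoSC (x : ℝ) : ℝ := (1 / (2 * Real.pi)) * Real.sqrt (4 - x ^ 2)

/-- Stieltjes transform of the semicircle law. -/
noncomputable def mSC (z : ℂ) : ℂ := ∫ x in (-2:ℝ)..2, (rhoSC x : ℂ) / (x - z)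

/-- `φ(t) = J₁(2t)/t`, with `φ(0) = 1`. -/
noncomputable def phiSC (t : ℝ) : ℝ := if t = 0 then 1 else besselJ1 (2 * t) / t

/-- The exponent `(q-p)/(pq)`, with the convention `1/p` for `q = ∞` (and `0` for `p = ∞`). -/
noncomputable def expo (p q : ℕ∞) : ℝ :=
  p.recTopCoe 0 (fun p' => q.recTopCoe ((p' : ℝ)⁻¹) (fun q' => ((q' : ℝ) - (p' : ℝ)) / ((p' : ℝ) * (q' : ℝ))))

section helpers

open scoped Matrix.Norms.L2Operator

variable {N : ℕ}

private lemma matAbs_posSemidef (A : Matrix (Fin N) (Fin N) ℂ) : (matAbs A).PosSemidef := by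
  have hd : (diagonal ((↑) ∘ (√·) ∘ (Matrix.posSemidef_self_mul_conjTranspose A).1.eigenvalues :
      Fin N → ℂ)).PosSemidef := by
    rw [Matrix.posSemidef_diagonal_iff]
    intro i
    simp only [Function.comp]
    exact_mod_cast Real.sqrt_nonneg _
  exact hd.mul_mul_conjTranspose_same _

private lemma matAbs_mul_self (A : Matrix (Fin N) (Fin N) ℂ) : matAbs A * matAbs A = A * Aᴴ := by
  set P := Matrix.posSemidef_self_mul_conjTranspose A
  have hU : star (P.1.eigenvectorUnitary : Matrix (Fin N) (Fin N) ℂ) *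
      (P.1.eigenvectorUnitary : Matrix (Fin N) (Fin N) ℂ) = 1 :=
    Matrix.mem_unitaryGroup_iff'.mp P.1.eigenvectorUnitary.2
  have hD : diagonal ((↑) ∘ (√·) ∘ P.1.eigenvalues : Fin N → ℂ) *
      diagonal ((↑) ∘ (√·) ∘ P.1.eigenvalues : Fin N → ℂ) =
      diagonal (RCLike.ofReal ∘ P.1.eigenvalues : Fin N → ℂ) := by
    rw [Matrix.diagonal_mul_diagonal]
    congr 1
    funext i
    simp only [Function.comp]
    rw [← Complex.ofReal_mul, Real.mul_self_sqrt (P.eigenvalues_nonneg i)]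
    rfl
  conv_rhs => rw [P.1.spectral_theorem, Unitary.conjStarAlgAut_apply]
  unfold matAbs
  simp only [mul_assoc]
  rw [← mul_assoc (star _) _ _, hU, one_mul, ← hD]
  simp only [mul_assoc]

private lemma mat_conj_pow {V D H : Matrix (Fin N) (Fin N) ℂ} (hV : V * star V = 1)
    (hV' : star V * V = 1) (hH : H = V * D * star V) (k : ℕ) :
    H ^ k = V * D ^ k * star V := by
  induction k with
  | zero => simpa [pow_zero] using hV.symm
  | succ k ih =>
    rw [pow_succ, ih, hH, pow_succ]
    simp only [mul_assoc]
    rw [show star V * (V * (D * star V)) = D * star V from by rw [← mul_assoc, hV', one_mul]]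

private lemma trace_pow_eq_sum {H : Matrix (Fin N) (Fin N) ℂ} (hH : H.IsHermitian) (k : ℕ) :
    (H ^ k).trace = ((∑ i, hH.eigenvalues i ^ k : ℝ) : ℂ) := by
  have hVV : (hH.eigenvectorUnitary : Matrix (Fin N) (Fin N) ℂ) *
      star (hH.eigenvectorUnitary : Matrix (Fin N) (Fin N) ℂ) = 1 :=
    Matrix.mem_unitaryGroup_iff.mp hH.eigenvectorUnitary.2
  have hVV' : star (hH.eigenvectorUnitary : Matrix (Fin N) (Fin N) ℂ) *
      (hH.eigenvectorUnitary : Matrix (Fin N) (Fin N) ℂ) = 1 :=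
    Matrix.mem_unitaryGroup_iff'.mp hH.eigenvectorUnitary.2
  rw [mat_conj_pow hVV hVV' hH.spectral_theorem k, Matrix.trace_mul_cycle, hVV', one_mul,
    Matrix.diagonal_pow, Matrix.trace_diagonal]
  push_cast
  rfl

private lemma ntr_pow_re {H : Matrix (Fin N) (Fin N) ℂ} (hH : H.IsHermitian) (k : ℕ) :
    (ntr (H ^ k)).re = (N : ℝ)⁻¹ * ∑ i, hH.eigenvalues i ^ k := by
  rw [ntr, trace_pow_eq_sum hH k]
  have : ((N : ℂ))⁻¹ = (((N : ℝ)⁻¹ : ℝ) : ℂ) := by push_cast; ring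
  rw [this, ← Complex.ofReal_mul, Complex.ofReal_re]

private lemma norm_diagonal_le (d : Fin N → ℂ) {t : ℝ} (ht : 0 ≤ t)
    (h : ∀ i, ‖d i‖ ≤ t) : ‖Matrix.diagonal d‖ ≤ t := by
  rw [Matrix.l2_opNorm_def]
  refine ContinuousLinearMap.opNorm_le_bound _ ht fun x => ?_
  have hx : ∀ y : EuclideanSpace ℂ (Fin N), ‖y‖ = Real.sqrt (∑ i, ‖y i‖ ^ 2) :=
    fun y => EuclideanSpace.norm_eq y
  rw [hx, hx]
  have happly : ∀ i, ((Matrix.toEuclideanLin ≪≫ₗ LinearMap.toContinuousLinearMap)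
      (Matrix.diagonal d) x) i = d i * x i := by
    intro i
    show (Matrix.diagonal d *ᵥ (fun j => x j)) i = d i * x i
    rw [Matrix.mulVec_diagonal]
  calc Real.sqrt (∑ i, ‖((Matrix.toEuclideanLin ≪≫ₗ LinearMap.toContinuousLinearMap)
        (Matrix.diagonal d) x) i‖ ^ 2)
      ≤ Real.sqrt (∑ i, t ^ 2 * ‖x i‖ ^ 2) := by
        apply Real.sqrt_le_sqrt
        apply Finset.sum_le_sum
        intro i _
        rw [happly i, norm_mul, mul_pow]
        exact mul_le_mul_of_nonneg_right
          (pow_le_pow_left₀ (norm_nonneg _) (h i) 2) (sq_nonneg _)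
    _ = t * Real.sqrt (∑ i, ‖x i‖ ^ 2) := by
        rw [← Finset.mul_sum, Real.sqrt_mul (by positivity), Real.sqrt_sq ht]

private lemma opNorm_le_of_eig (hN : 0 < N) (B : Matrix (Fin N) (Fin N) ℂ)
    (hps : (matAbs B).PosSemidef) {t : ℝ} (ht : 0 ≤ t)
    (h : ∀ i, hps.1.eigenvalues i ≤ t) : opNorm B ≤ t := by
  haveI : Nonempty (Fin N) := ⟨⟨0, hN⟩⟩
  haveI : Nontrivial (Matrix (Fin N) (Fin N) ℂ) := by
    refine ⟨0, 1, fun hcon => ?_⟩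
    have := congrFun (congrFun hcon ⟨0, hN⟩) ⟨0, hN⟩
    simp [Matrix.one_apply] at this
  have hop : opNorm B = ‖B‖ := rfl
  -- ‖B‖ = ‖matAbs B‖
  have h1 : ‖B‖ * ‖B‖ = ‖B * Bᴴ‖ := by
    have := Matrix.l2_opNorm_conjTranspose_mul_self Bᴴ
    rw [Matrix.conjTranspose_conjTranspose, Matrix.l2_opNorm_conjTranspose] at this
    exact this.symm
  have h2 : matAbs B * matAbs B = B * Bᴴ :=
    matAbs_mul_self B
  have h3 : ‖matAbs B‖ * ‖matAbs B‖ = ‖B * Bᴴ‖ := by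
    rw [← h2]
    conv_lhs => rw [← Matrix.l2_opNorm_conjTranspose_mul_self (matAbs B)]
    rw [hps.1.eq]
  have hBabs : ‖B‖ = ‖matAbs B‖ := by
    have := h1.trans h3.symm
    have h4 := congrArg Real.sqrt this
    rwa [Real.sqrt_mul_self (norm_nonneg _), Real.sqrt_mul_self (norm_nonneg _)] at h4
  rw [hop, hBabs]
  conv_lhs => rw [hps.1.spectral_theorem]
  rw [Unitary.conjStarAlgAut_apply, ← Unitary.coe_star, CStarRing.norm_mul_coe_unitary, CStarRing.norm_coe_unitary_mul]
  apply norm_diagonal_le _ ht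
  intro i
  have h0 := hps.eigenvalues_nonneg i
  simpa [Function.comp, Complex.norm_real, abs_of_nonneg h0] using h i

private lemma rpow_sum_le (s : Fin N → ℝ) (hs : ∀ i, 0 ≤ s i) {p q : ℕ}
    (hp : 0 < p) (hpq : p ≤ q) :
    (∑ i, s i ^ q) ^ ((q : ℝ)⁻¹) ≤ (∑ i, s i ^ p) ^ ((p : ℝ)⁻¹) := by
  have hq : 0 < q := lt_of_lt_of_le hp hpq
  set S : ℝ := ∑ i, s i ^ p with hS
  have hS0 : 0 ≤ S := Finset.sum_nonneg fun i _ => pow_nonneg (hs i) p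
  rcases eq_or_lt_of_le hS0 with hS0' | hSpos
  · -- S = 0 : all s i = 0
    have hzero : ∀ i, s i = 0 := by
      intro i
      have h1 : s i ^ p ≤ 0 := hS0' ▸ Finset.single_le_sum
        (fun j (_ : j ∈ Finset.univ) => pow_nonneg (hs j) p) (Finset.mem_univ i)
      have h2 : s i ^ p = 0 := le_antisymm h1 (pow_nonneg (hs i) p)
      exact pow_eq_zero_iff hp.ne'  |>.mp h2
    have hL : (∑ i, s i ^ q) = 0 := by simp [hzero, zero_pow hq.ne']
    rw [hL, Real.zero_rpow (by positivity)]
    exact Real.rpow_nonneg hS0 _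
  · -- S > 0
    have hsle : ∀ i, s i ≤ S ^ ((p : ℝ)⁻¹) := by
      intro i
      have h1 : s i ^ p ≤ S := Finset.single_le_sum
        (fun j (_ : j ∈ Finset.univ) => pow_nonneg (hs j) p) (Finset.mem_univ i)
      have h2 : (s i ^ p : ℝ) ^ ((p : ℝ)⁻¹) ≤ S ^ ((p : ℝ)⁻¹) :=
        Real.rpow_le_rpow (pow_nonneg (hs i) p) h1 (by positivity)
      calc s i = ((s i ^ p : ℝ)) ^ ((p : ℝ)⁻¹) := by
            rw [← Real.rpow_natCast (s i) p, ← Real.rpow_mul (hs i),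
              mul_inv_cancel₀ (by exact_mod_cast hp.ne'), Real.rpow_one]
        _ ≤ S ^ ((p : ℝ)⁻¹) := h2
    have hsum : (∑ i, s i ^ q) ≤ S ^ ((q : ℝ) / (p : ℝ)) := by
      have hterm : ∀ i, s i ^ q ≤ s i ^ p * (S ^ ((p : ℝ)⁻¹)) ^ (q - p) := by
        intro i
        have : s i ^ q = s i ^ p * s i ^ (q - p) := by
          rw [← pow_add, Nat.add_sub_cancel' hpq]
        rw [this]
        exact mul_le_mul_of_nonneg_left
          (pow_le_pow_left₀ (hs i) (hsle i) _) (pow_nonneg (hs i) p)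
      calc (∑ i, s i ^ q) ≤ ∑ i, s i ^ p * (S ^ ((p : ℝ)⁻¹)) ^ (q - p) :=
            Finset.sum_le_sum fun i _ => hterm i
        _ = S * (S ^ ((p : ℝ)⁻¹)) ^ (q - p) := by rw [← Finset.sum_mul]
        _ = S * S ^ ((p : ℝ)⁻¹ * ((q : ℝ) - (p : ℝ))) := by
            rw [← Real.rpow_natCast (S ^ ((p : ℝ)⁻¹)) (q - p), ← Real.rpow_mul hS0,
              Nat.cast_sub hpq]
        _ = S ^ (1 + (p : ℝ)⁻¹ * ((q : ℝ) - (p : ℝ))) := by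
            rw [Real.rpow_add hSpos, Real.rpow_one]
        _ = S ^ ((q : ℝ) / (p : ℝ)) := by
            congr 1
            have hpne : (p : ℝ) ≠ 0 := by positivity
            field_simp
            ring
    calc (∑ i, s i ^ q) ^ ((q : ℝ)⁻¹) ≤ (S ^ ((q : ℝ) / (p : ℝ))) ^ ((q : ℝ)⁻¹) :=
          Real.rpow_le_rpow (Finset.sum_nonneg fun i _ => pow_nonneg (hs i) q) hsum
            (by positivity)
      _ = S ^ ((p : ℝ)⁻¹) := by
          rw [← Real.rpow_mul hS0]
          congr 1
          have hpne : (p : ℝ) ≠ 0 := by positivity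
          have hqne : (q : ℝ) ≠ 0 := by positivity
          field_simp

end helpers

/-- `|||B|||_{q,ℓ} ≤ C (1 + (Nℓ)^{(q-p)/(pq)}) |||B|||_{p,ℓ}`. -/
theorem wnorm_reverse_mono :
    ∃ C : ℝ, 0 < C ∧ ∀ (N : ℕ) (B : Matrix (Fin N) (Fin N) ℂ) (ℓ : ℝ) (p q : ℕ∞),
      0 < N → 0 < ℓ → 2 ≤ p → p ≤ q →
      wnorm q ℓ B ≤ C * (1 + ((N : ℝ) * ℓ) ^ expo p q) * wnorm p ℓ B := by
  refine ⟨1, one_pos, ?_⟩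
  intro N B ℓ p q hN hℓ hp hpq
  -- basic data
  have hps : (matAbs B).PosSemidef :=
    matAbs_posSemidef B
  set s : Fin N → ℝ := hps.1.eigenvalues with hs_def
  have hs : ∀ i, 0 ≤ s i := fun i => hps.eigenvalues_nonneg i
  have hNR : (0:ℝ) < N := by exact_mod_cast hN
  have hx : (0:ℝ) < (N : ℝ) * ℓ := mul_pos hNR hℓ
  set x : ℝ := (N : ℝ) * ℓ with hx_def
  -- schatten formula
  have hschat : ∀ k : ℕ, schatten k B = ((N : ℝ)⁻¹ * ∑ i, s i ^ k) ^ ((k : ℝ)⁻¹) := by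
    intro k
    rw [schatten, ntr_pow_re hps.1 k]
  have hschat_nonneg : ∀ k : ℕ, 0 ≤ schatten k B := by
    intro k
    rw [hschat]
    exact Real.rpow_nonneg (mul_nonneg (by positivity)
      (Finset.sum_nonneg fun i _ => pow_nonneg (hs i) k)) _
  -- T k
  set T : ℕ → ℝ := fun k => (∑ i, s i ^ k) ^ ((k : ℝ)⁻¹) with hT_def
  have hT_nonneg : ∀ k, 0 ≤ T k := by
    intro k
    apply Real.rpow_nonneg
    exact Finset.sum_nonneg fun i _ => pow_nonneg (hs i) k
  -- schatten k B / ℓ ^ (k⁻¹) = T k * x ^ (-(k⁻¹))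
  have hdiv : ∀ k : ℕ, 0 < k →
      schatten k B / ℓ ^ ((k : ℝ)⁻¹) = T k * x ^ (-((k : ℝ)⁻¹)) := by
    intro k hk
    have hkR : (0:ℝ) < k := by exact_mod_cast hk
    rw [hschat, Real.mul_rpow (by positivity) (Finset.sum_nonneg fun i _ => pow_nonneg (hs i) k)]
    rw [div_eq_mul_inv, ← Real.rpow_neg hℓ.le]
    rw [Real.rpow_neg hx.le]
    rw [hx_def, Real.mul_rpow hNR.le hℓ.le, mul_inv]
    rw [← Real.rpow_neg hNR.le, ← Real.rpow_neg hℓ.le, Real.rpow_neg hNR.le,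
      ← Real.inv_rpow hNR.le]
    ring
  -- operator norm bound
  have hop : ∀ k : ℕ, 2 ≤ k → opNorm B ≤ T k := by
    intro k hk
    apply opNorm_le_of_eig hN B hps (hT_nonneg k)
    intro i
    have h1 : s i ^ k ≤ ∑ j, s j ^ k := Finset.single_le_sum
      (fun j (_ : j ∈ Finset.univ) => pow_nonneg (hs j) k) (Finset.mem_univ i)
    have hk0 : (k:ℝ) ≠ 0 := by positivity
    calc s i = ((s i ^ k : ℝ)) ^ ((k : ℝ)⁻¹) := by
          rw [← Real.rpow_natCast (s i) k, ← Real.rpow_mul (hs i),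
            mul_inv_cancel₀ hk0, Real.rpow_one]
      _ ≤ T k := Real.rpow_le_rpow (pow_nonneg (hs i) k) h1 (by positivity)
  -- now case split
  induction p using ENat.recTopCoe with
  | top =>
    have hq : q = ⊤ := top_le_iff.mp hpq
    subst hq
    have hw : 0 ≤ wnorm ⊤ ℓ B := by
      simp only [wnorm, ENat.recTopCoe_top]
      have := hschat_nonneg 2
      have hℓ2 : 0 < ℓ ^ ((2:ℝ)⁻¹) := Real.rpow_pos_of_pos hℓ _
      have hopn : 0 ≤ opNorm B := norm_nonneg _
      positivity
    have hexpo : expo ⊤ ⊤ = 0 := rfl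
    rw [hexpo, Real.rpow_zero]
    nlinarith [hw]
  | coe p' =>
    have hp' : 2 ≤ p' := by exact_mod_cast hp
    have hp0 : 0 < p' := by omega
    have hp0R : (0:ℝ) < (p' : ℝ) := by exact_mod_cast hp0
    have hap : schatten p' B / ℓ ^ ((p' : ℝ)⁻¹) = T p' * x ^ (-((p' : ℝ)⁻¹)) := hdiv p' hp0
    have ha2 : 0 ≤ schatten 2 B / ℓ ^ ((2:ℝ)⁻¹) := by
      have := hschat_nonneg 2
      have hℓ2 : 0 < ℓ ^ ((2:ℝ)⁻¹) := Real.rpow_pos_of_pos hℓ _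
      positivity
    have hap0 : 0 ≤ schatten p' B / ℓ ^ ((p' : ℝ)⁻¹) := by
      have := hschat_nonneg p'
      have hℓp : 0 < ℓ ^ ((p' : ℝ)⁻¹) := Real.rpow_pos_of_pos hℓ _
      positivity
    induction q using ENat.recTopCoe with
    | top =>
      -- goal : wnorm ⊤ ≤ 1 * (1 + x ^ (p'⁻¹)) * wnorm p'
      have hexpo : expo (p' : ℕ∞) ⊤ = (p' : ℝ)⁻¹ := by
        simp [expo, ENat.recTopCoe_coe, ENat.recTopCoe_top]
      rw [hexpo]
      simp only [wnorm, ENat.recTopCoe_top, ENat.recTopCoe_coe]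
      have hkey : opNorm B ≤ x ^ ((p' : ℝ)⁻¹) * (schatten p' B / ℓ ^ ((p' : ℝ)⁻¹)) := by
        rw [hap, show x ^ ((p' : ℝ)⁻¹) * (T p' * x ^ (-((p' : ℝ)⁻¹)))
            = T p' * (x ^ ((p' : ℝ)⁻¹) * x ^ (-((p' : ℝ)⁻¹))) from by ring,
          ← Real.rpow_add hx, add_neg_cancel, Real.rpow_zero, mul_one]
        exact hop p' hp'
      have hM : 0 ≤ x ^ ((p' : ℝ)⁻¹) := Real.rpow_nonneg hx.le _
      nlinarith [hkey, hM, ha2, hap0]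
    | coe q' =>
      have hq' : p' ≤ q' := by exact_mod_cast hpq
      have hq0 : 0 < q' := lt_of_lt_of_le hp0 hq'
      have hq0R : (0:ℝ) < (q' : ℝ) := by exact_mod_cast hq0
      have hexpo : expo (p' : ℕ∞) (q' : ℕ∞) = (p' : ℝ)⁻¹ - (q' : ℝ)⁻¹ := by
        simp only [expo, ENat.recTopCoe_coe]
        field_simp
      rw [hexpo]
      simp only [wnorm, ENat.recTopCoe_coe]
      have haq : schatten q' B / ℓ ^ ((q' : ℝ)⁻¹) = T q' * x ^ (-((q' : ℝ)⁻¹)) :=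
        hdiv q' hq0
      have hxe : x ^ ((p' : ℝ)⁻¹ - (q' : ℝ)⁻¹) * x ^ (-((p' : ℝ)⁻¹)) = x ^ (-((q' : ℝ)⁻¹)) := by
        rw [← Real.rpow_add hx]
        congr 1
        ring
      have hkey : schatten q' B / ℓ ^ ((q' : ℝ)⁻¹) ≤
          x ^ ((p' : ℝ)⁻¹ - (q' : ℝ)⁻¹) * (schatten p' B / ℓ ^ ((p' : ℝ)⁻¹)) := by
        rw [haq, hap]
        calc T q' * x ^ (-((q' : ℝ)⁻¹)) ≤ T p' * x ^ (-((q' : ℝ)⁻¹)) :=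
              mul_le_mul_of_nonneg_right (rpow_sum_le s hs hp0 hq') (Real.rpow_nonneg hx.le _)
          _ = x ^ ((p' : ℝ)⁻¹ - (q' : ℝ)⁻¹) * (T p' * x ^ (-((p' : ℝ)⁻¹))) := by
              rw [← hxe]; ring
      have hM : 0 ≤ x ^ ((p' : ℝ)⁻¹ - (q' : ℝ)⁻¹) := Real.rpow_nonneg hx.le _
      nlinarith [hkey, hM, ha2, hap0]
end

section
/- Let W be an N×N Hermitian matrix with eigenvalues λ_i and orthonormal eigenvectors u_i, let Q, R ∈ ℂ^{N×N}, and z, w ∈ ℂ∖ℝ with resolvent G(ζ) = (W - ζ)^{-1}. Then ⟨Im G(z) Q G(w) R Im G(z) R* G(w)* Q*⟩ ≤ C · N · ⟨Im G(z) Q |G(w)| Q*⟩ · ⟨Im G(z) R* |G(w)| R⟩ for a universal constant C, where |G(w)| = (G(w)G(w)*)^{1/2} and Im G = (G - G*)/(2i). -/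
open Matrix MeasureTheory Asymptotics
open scoped ComplexOrder BigOperators

section SqrtAux

open scoped MatrixOrder

noncomputable def Matrix.PosSemidef.sqrt {n : ℕ} {A : Matrix (Fin n) (Fin n) ℂ}
    (_ : A.PosSemidef) : Matrix (Fin n) (Fin n) ℂ :=
  CFC.sqrt A

lemma Matrix.PosSemidef.posSemidef_sqrt {n : ℕ} {A : Matrix (Fin n) (Fin n) ℂ}
    (hA : A.PosSemidef) : hA.sqrt.PosSemidef :=
  (CFC.sqrt_nonneg A).posSemidef

lemma Matrix.PosSemidef.sqrt_mul_self {n : ℕ} {A : Matrix (Fin n) (Fin n) ℂ}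
    (hA : A.PosSemidef) : hA.sqrt * hA.sqrt = A :=
  CFC.sqrt_mul_sqrt_self A hA.nonneg

lemma Matrix.PosSemidef.eq_of_sq_eq_sq {n : ℕ} {A B : Matrix (Fin n) (Fin n) ℂ}
    (hA : A.PosSemidef) (hB : B.PosSemidef) (h : A ^ 2 = B ^ 2) : A = B := by
  rw [← CFC.sqrt_mul_self A hA.nonneg, ← CFC.sqrt_mul_self B hB.nonneg, ← sq, ← sq, h]

lemma matAbs_eq {n : ℕ} (A : Matrix (Fin n) (Fin n) ℂ) :
    matAbs A = (Matrix.posSemidef_self_mul_conjTranspose A).sqrt := by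
  rw [Matrix.PosSemidef.sqrt,
    CFC.sqrt_eq_real_sqrt _ (Matrix.posSemidef_self_mul_conjTranspose A).nonneg,
    cfcₙ_eq_cfc (hf0 := Real.sqrt_zero), (Matrix.posSemidef_self_mul_conjTranspose A).1.cfc_eq, Matrix.IsHermitian.cfc,
    Unitary.conjStarAlgAut_apply]
  rfl

end SqrtAux

section ReductionAux

attribute [local instance] Matrix.frobeniusSeminormedAddCommGroup

private lemma retr_norm {n : ℕ} (M : Matrix (Fin n) (Fin n) ℂ) :
    (Matrix.trace (M * Mᴴ)).re = ‖M‖ ^ 2 := by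
  have h : ‖M‖ ^ 2 = ∑ i, ∑ j, ‖M i j‖ ^ 2 := by
    have h2 : (0:ℝ) ≤ ∑ i, ∑ j, ‖M i j‖ ^ (2:ℝ) := by positivity
    rw [Matrix.frobenius_norm_def, ← Real.rpow_natCast _ 2, ← Real.rpow_mul h2]
    norm_num
  rw [h]
  simp only [Matrix.trace, Matrix.diag, Matrix.mul_apply, Matrix.conjTranspose_apply]
  rw [Complex.re_sum]
  refine Finset.sum_congr rfl fun i _ => ?_
  rw [Complex.re_sum]
  refine Finset.sum_congr rfl fun j _ => ?_
  rw [show star (M i j) = (starRingEnd ℂ) (M i j) from rfl, Complex.mul_conj]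
  rw [Complex.ofReal_re, Complex.normSq_eq_norm_sq]

private lemma trace_cs {n : ℕ} (A B : Matrix (Fin n) (Fin n) ℂ) :
    (Matrix.trace ((A * B) * (A * B)ᴴ)).re
      ≤ (Matrix.trace (A * Aᴴ)).re * (Matrix.trace (B * Bᴴ)).re := by
  rw [retr_norm, retr_norm, retr_norm, ← mul_pow]
  exact pow_le_pow_left₀ (norm_nonneg _) (Matrix.frobenius_norm_mul A B) 2

private lemma core {n : ℕ} (P T U G Q R : Matrix (Fin n) (Fin n) ℂ)
    (hPH : Pᴴ = P) (hTH : Tᴴ = T) (hG : G = T * (T * U))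
    (hU : Uᴴ * (T * (T * U)) = T * T) :
    (Matrix.trace (P * P * Q * G * R * (P * P) * Rᴴ * Gᴴ * Qᴴ)).re
      ≤ (Matrix.trace (P * P * Q * (T * T) * Qᴴ)).re
        * (Matrix.trace (P * P * Rᴴ * (T * T) * R)).re := by
  have key := trace_cs (P * (Q * T)) (T * (U * (R * P)))
  have e0 : Matrix.trace ((P * (Q * T)) * (T * (U * (R * P)))
        * ((P * (Q * T)) * (T * (U * (R * P))))ᴴ)
      = Matrix.trace (P * P * Q * G * R * (P * P) * Rᴴ * Gᴴ * Qᴴ) := by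
    subst hG
    simp only [conjTranspose_mul, hPH, hTH, mul_assoc]
    conv_lhs => rw [Matrix.trace_mul_comm]
    conv_rhs => rw [Matrix.trace_mul_comm]
    simp only [mul_assoc]
    conv_rhs => rw [Matrix.trace_mul_comm]
    simp only [mul_assoc]
  have e1 : Matrix.trace ((P * (Q * T)) * (P * (Q * T))ᴴ)
      = Matrix.trace (P * P * Q * (T * T) * Qᴴ) := by
    simp only [conjTranspose_mul, hPH, hTH, mul_assoc]
    conv_lhs => rw [Matrix.trace_mul_comm]
    conv_rhs => rw [Matrix.trace_mul_comm]
    simp only [mul_assoc]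
    conv_rhs => rw [Matrix.trace_mul_comm]
    simp only [mul_assoc]
  have e2 : Matrix.trace ((T * (U * (R * P))) * (T * (U * (R * P)))ᴴ)
      = Matrix.trace (P * P * Rᴴ * (T * T) * R) := by
    simp only [conjTranspose_mul, hPH, hTH, mul_assoc]
    conv_lhs => rw [Matrix.trace_mul_comm]
    simp only [mul_assoc]
    conv_lhs => rw [Matrix.trace_mul_comm]
    simp only [mul_assoc]
    rw [hU]
    conv_lhs => rw [Matrix.trace_mul_comm]
    conv_rhs => rw [Matrix.trace_mul_comm]
    simp only [mul_assoc]
    conv_rhs => rw [Matrix.trace_mul_comm]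
    simp only [mul_assoc]
    conv_lhs => rw [Matrix.trace_mul_comm]
    simp only [mul_assoc]
    conv_lhs => rw [Matrix.trace_mul_comm]
    simp only [mul_assoc]
  rw [e0, e1, e2] at key
  exact key

private lemma det_res_unit' {n : ℕ} {W : Matrix (Fin n) (Fin n) ℂ} (hW : W.IsHermitian)
    {ζ : ℂ} (hζ : ζ.im ≠ 0) : IsUnit (W - ζ • (1 : Matrix (Fin n) (Fin n) ℂ)).det := by
  rw [isUnit_iff_ne_zero]
  intro hdet
  obtain ⟨v, hv, hv0⟩ := (Matrix.exists_mulVec_eq_zero_iff).mpr hdet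
  have hWv : W *ᵥ v = ζ • v := by
    rw [Matrix.sub_mulVec, Matrix.smul_mulVec, Matrix.one_mulVec, sub_eq_zero] at hv0
    exact hv0
  have h1 : star v ⬝ᵥ (W *ᵥ v) = ζ * (star v ⬝ᵥ v) := by
    rw [hWv, dotProduct_smul, smul_eq_mul]
  have h2 : star (star v ⬝ᵥ (W *ᵥ v)) = star v ⬝ᵥ (W *ᵥ v) := by
    conv_lhs => rw [Matrix.star_dotProduct, star_star, Matrix.star_mulVec]
    rw [← Matrix.dotProduct_mulVec, hW.eq]
  have hvv : star v ⬝ᵥ v = ((∑ i, Complex.normSq (v i) : ℝ) : ℂ) := by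
    rw [dotProduct]
    push_cast
    refine Finset.sum_congr rfl fun i _ => ?_
    rw [Pi.star_apply, show star (v i) = (starRingEnd ℂ) (v i) from rfl, mul_comm,
      Complex.mul_conj]
  set r : ℝ := ∑ i, Complex.normSq (v i) with hr
  rw [h1, hvv] at h2
  have h3 : (ζ * r).im = 0 := by
    have := congrArg Complex.im h2
    simp only [Complex.star_def, Complex.conj_im] at this
    linarith
  have h4 : ζ.im * r = 0 := by
    simpa [Complex.mul_im] using h3
  have hr0 : r = 0 := by
    rcases mul_eq_zero.mp h4 with h | h
    · exact absurd h hζ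
    · exact h
  apply hv
  have hzero : star v ⬝ᵥ v = 0 := by rw [hvv, hr0]; simp
  exact dotProduct_star_self_eq_zero.mp hzero

private lemma res_conjT {n : ℕ} {W : Matrix (Fin n) (Fin n) ℂ} (hW : W.IsHermitian) (ζ : ℂ) :
    (resOf W ζ)ᴴ = resOf W ((starRingEnd ℂ) ζ) := by
  rw [resOf, resOf, Matrix.conjTranspose_nonsing_inv]
  congr 1
  rw [Matrix.conjTranspose_sub, hW.eq, Matrix.conjTranspose_smul, Matrix.conjTranspose_one]
  rfl

private lemma conj_im_ne {ζ : ℂ} (hζ : ζ.im ≠ 0) : ((starRingEnd ℂ) ζ).im ≠ 0 := by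
  simpa using neg_ne_zero.mpr hζ

private lemma imPart_res {n : ℕ} {W : Matrix (Fin n) (Fin n) ℂ} (hW : W.IsHermitian)
    {z : ℂ} (hz : z.im ≠ 0) :
    imPart (resOf W z) = ((z.im : ℝ) : ℂ) • (resOf W z * (resOf W z)ᴴ) := by
  have h1 : resOf W z * (W - z • 1) = 1 :=
    Matrix.nonsing_inv_mul _ (det_res_unit' hW hz)
  have h2 : (W - (starRingEnd ℂ) z • 1) * (resOf W z)ᴴ = 1 := by
    rw [res_conjT hW, resOf]
    exact Matrix.mul_nonsing_inv _ (det_res_unit' hW (conj_im_ne hz))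
  have hdiff : (W - (starRingEnd ℂ) z • (1 : Matrix (Fin n) (Fin n) ℂ)) - (W - z • 1)
      = (z - (starRingEnd ℂ) z) • (1 : Matrix (Fin n) (Fin n) ℂ) := by
    rw [sub_smul]; abel
  have key : resOf W z - (resOf W z)ᴴ
      = (z - (starRingEnd ℂ) z) • (resOf W z * (resOf W z)ᴴ) := by
    calc resOf W z - (resOf W z)ᴴ
        = resOf W z * ((W - (starRingEnd ℂ) z • 1) * (resOf W z)ᴴ)
          - (resOf W z * (W - z • 1)) * (resOf W z)ᴴ := by rw [h1, h2, mul_one, one_mul]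
      _ = resOf W z * ((W - (starRingEnd ℂ) z • 1) - (W - z • 1)) * (resOf W z)ᴴ := by
          noncomm_ring
      _ = (z - (starRingEnd ℂ) z) • (resOf W z * (resOf W z)ᴴ) := by
          rw [hdiff, Matrix.mul_smul, Matrix.mul_one, Matrix.smul_mul]
  rw [imPart, key, smul_smul]
  congr 1
  rw [Complex.sub_conj]
  have hI : (2 * Complex.I) ≠ 0 := by simp [Complex.I_ne_zero]
  field_simp
  push_cast
  ring

private lemma res_normal {n : ℕ} {W : Matrix (Fin n) (Fin n) ℂ} (hW : W.IsHermitian)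
    (w : ℂ) :
    resOf W w * (resOf W w)ᴴ = (resOf W w)ᴴ * resOf W w := by
  have cent : ∀ (a : ℂ) (M : Matrix (Fin n) (Fin n) ℂ),
      Commute (a • (1 : Matrix (Fin n) (Fin n) ℂ)) M := fun a M => by
    unfold Commute SemiconjBy
    rw [Matrix.smul_mul, Matrix.mul_smul, Matrix.one_mul, Matrix.mul_one]
  have hcomm : (W - w • (1 : Matrix (Fin n) (Fin n) ℂ)) * (W - (starRingEnd ℂ) w • 1)
      = (W - (starRingEnd ℂ) w • 1) * (W - w • 1) := by
    have h1 : Commute (W - w • (1 : Matrix (Fin n) (Fin n) ℂ)) W :=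
      (Commute.refl W).sub_left (cent w W)
    have h2 : Commute (W - w • (1 : Matrix (Fin n) (Fin n) ℂ)) ((starRingEnd ℂ) w • 1) :=
      (cent ((starRingEnd ℂ) w) (W - w • 1)).symm
    exact (h1.sub_right h2).eq
  rw [res_conjT hW, resOf, resOf, ← Matrix.mul_inv_rev, ← Matrix.mul_inv_rev, hcomm]

private lemma res_det_unit {n : ℕ} {W : Matrix (Fin n) (Fin n) ℂ} (hW : W.IsHermitian)
    {w : ℂ} (hw : w.im ≠ 0) : IsUnit (resOf W w).det := by
  rw [resOf, Matrix.det_nonsing_inv, Ring.inverse_eq_inv]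
  exact isUnit_iff_ne_zero.mpr (inv_ne_zero (isUnit_iff_ne_zero.mp (det_res_unit' hW hw)))

private lemma polar_facts {n : ℕ} (G : Matrix (Fin n) (Fin n) ℂ)
    (hdetG : IsUnit G.det) (hnorm : G * Gᴴ = Gᴴ * G) :
    ∃ U : Matrix (Fin n) (Fin n) ℂ,
      matAbs G * U = G ∧ Uᴴ * matAbs G * U = matAbs G := by
  have hS : (matAbs G).PosSemidef := by
    rw [matAbs_eq]; exact (Matrix.posSemidef_self_mul_conjTranspose G).posSemidef_sqrt
  have hSS : matAbs G * matAbs G = G * Gᴴ := by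
    rw [matAbs_eq]; exact (Matrix.posSemidef_self_mul_conjTranspose G).sqrt_mul_self
  have hdetGH : IsUnit Gᴴ.det := by rw [Matrix.det_conjTranspose]; exact hdetG.star
  have hSdet : IsUnit (matAbs G).det := by
    have h : (matAbs G).det * (matAbs G).det = G.det * Gᴴ.det := by
      rw [← Matrix.det_mul, hSS, Matrix.det_mul]
    rw [isUnit_iff_ne_zero]
    intro h0
    rw [h0, mul_zero] at h
    exact (hdetG.mul hdetGH).ne_zero h.symm
  have hSU : matAbs G * ((matAbs G)⁻¹ * G) = G := by
    rw [← mul_assoc, Matrix.mul_nonsing_inv _ hSdet, one_mul]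
  refine ⟨(matAbs G)⁻¹ * G, hSU, ?_⟩
  have hSH : (matAbs G)ᴴ = matAbs G := hS.1
  have hUH : ((matAbs G)⁻¹ * G)ᴴ = Gᴴ * (matAbs G)⁻¹ := by
    rw [Matrix.conjTranspose_mul, Matrix.conjTranspose_nonsing_inv, hSH]
  have hUUH : ((matAbs G)⁻¹ * G) * ((matAbs G)⁻¹ * G)ᴴ = 1 := by
    rw [hUH]
    calc (matAbs G)⁻¹ * G * (Gᴴ * (matAbs G)⁻¹)
        = (matAbs G)⁻¹ * (G * Gᴴ) * (matAbs G)⁻¹ := by noncomm_ring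
      _ = (matAbs G)⁻¹ * (matAbs G * matAbs G) * (matAbs G)⁻¹ := by rw [hSS]
      _ = ((matAbs G)⁻¹ * matAbs G) * (matAbs G * (matAbs G)⁻¹) := by noncomm_ring
      _ = 1 := by
          rw [Matrix.nonsing_inv_mul _ hSdet, Matrix.mul_nonsing_inv _ hSdet, one_mul]
  have hUS : ((matAbs G)⁻¹ * G)ᴴ * matAbs G = Gᴴ := by
    have h := congrArg conjTranspose hSU
    rw [Matrix.conjTranspose_mul, hSH] at h
    exact h
  have hsq : (((matAbs G)⁻¹ * G)ᴴ * matAbs G * ((matAbs G)⁻¹ * G)) ^ 2 = (matAbs G) ^ 2 := by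
    have e : (((matAbs G)⁻¹ * G)ᴴ * matAbs G * ((matAbs G)⁻¹ * G))
          * (((matAbs G)⁻¹ * G)ᴴ * matAbs G * ((matAbs G)⁻¹ * G))
        = ((matAbs G)⁻¹ * G)ᴴ * matAbs G
          * (((matAbs G)⁻¹ * G) * ((matAbs G)⁻¹ * G)ᴴ)
          * (matAbs G * ((matAbs G)⁻¹ * G)) := by noncomm_ring
    have e2 : ((matAbs G)⁻¹ * G)ᴴ * matAbs G * (matAbs G * ((matAbs G)⁻¹ * G))
        = matAbs G * matAbs G := by
      calc ((matAbs G)⁻¹ * G)ᴴ * matAbs G * (matAbs G * ((matAbs G)⁻¹ * G))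
          = (((matAbs G)⁻¹ * G)ᴴ * matAbs G) * (matAbs G * ((matAbs G)⁻¹ * G)) := by
            noncomm_ring
        _ = Gᴴ * G := by rw [hUS, hSU]
        _ = G * Gᴴ := hnorm.symm
        _ = matAbs G * matAbs G := hSS.symm
    rw [pow_two, pow_two, e, hUUH, mul_one, e2]
  exact (hS.conjTranspose_mul_mul_same _).eq_of_sq_eq_sq hS hsq

private lemma final_scalar (N : ℕ) (hN : 0 < N) (c : ℝ) (t0 t1 t2 : ℂ)
    (h : t0.re ≤ t1.re * t2.re) :
    ((N:ℂ)⁻¹ * (((c * c : ℝ) : ℂ) * t0)).re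
      ≤ 1 * (N:ℝ) * ((N:ℂ)⁻¹ * ((c:ℂ) * t1)).re * ((N:ℂ)⁻¹ * ((c:ℂ) * t2)).re := by
  have hcast : ((N:ℂ))⁻¹ = (((N:ℝ)⁻¹ : ℝ) : ℂ) := by push_cast; ring
  rw [hcast]
  simp only [Complex.re_ofReal_mul]
  have hNR : (0:ℝ) < (N:ℝ) := by exact_mod_cast hN
  have key : (N:ℝ)⁻¹ * ((c*c) * t0.re) ≤ (N:ℝ)⁻¹ * ((c*c) * (t1.re*t2.re)) := by
    apply mul_le_mul_of_nonneg_left _ (inv_nonneg.mpr hNR.le)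
    exact mul_le_mul_of_nonneg_left h (mul_self_nonneg c)
  refine key.trans (le_of_eq ?_)
  field_simp

end ReductionAux

/-- reduction inequality
`⟨Im G(z) Q G(w) R Im G(z) R* G(w)* Q*⟩ ≤ C N ⟨Im G(z) Q |G(w)| Q*⟩ ⟨Im G(z) R* |G(w)| R⟩`. -/
theorem reduction_inequality :
    ∃ C : ℝ, 0 < C ∧ ∀ (N : ℕ) (W Q R : Matrix (Fin N) (Fin N) ℂ) (z w : ℂ),
      W.IsHermitian → z.im ≠ 0 → w.im ≠ 0 →
      (ntr (imPart (resOf W z) * Q * resOf W w * R * imPart (resOf W z) * Rᴴ *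
          (resOf W w)ᴴ * Qᴴ)).re
        ≤ C * N * (ntr (imPart (resOf W z) * Q * matAbs (resOf W w) * Qᴴ)).re *
            (ntr (imPart (resOf W z) * Rᴴ * matAbs (resOf W w) * R)).re := by
  refine ⟨1, one_pos, ?_⟩
  intro N W Q R z w hW hz hw
  rcases Nat.eq_zero_or_pos N with hN | hN
  · subst hN
    simp [ntr, Matrix.trace]
  · have hNR : (0:ℝ) < (N:ℝ) := by exact_mod_cast hN
    obtain ⟨U, hSU, hUSU⟩ := polar_facts (resOf W w) (res_det_unit hW hw) (res_normal hW w)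
    have hS : (matAbs (resOf W w)).PosSemidef := by
      rw [matAbs_eq]; exact (Matrix.posSemidef_self_mul_conjTranspose _).posSemidef_sqrt
    have hD : (resOf W z * (resOf W z)ᴴ).PosSemidef :=
      Matrix.posSemidef_self_mul_conjTranspose _
    have hPP : hD.sqrt * hD.sqrt = resOf W z * (resOf W z)ᴴ := hD.sqrt_mul_self
    have hTT : hS.sqrt * hS.sqrt = matAbs (resOf W w) := hS.sqrt_mul_self
    have hG : resOf W w = hS.sqrt * (hS.sqrt * U) := by
      rw [← mul_assoc, hTT, hSU]
    have hU : Uᴴ * (hS.sqrt * (hS.sqrt * U)) = hS.sqrt * hS.sqrt := by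
      rw [← mul_assoc hS.sqrt hS.sqrt U, hTT, ← mul_assoc, hUSU, ← hTT]
    have hcore := core hD.sqrt hS.sqrt U (resOf W w) Q R
      hD.posSemidef_sqrt.1 hS.posSemidef_sqrt.1 hG hU
    rw [hPP, hTT] at hcore
    rw [imPart_res hW hz]
    simp only [ntr, smul_mul_assoc, mul_smul_comm, smul_smul, Matrix.trace_smul, smul_eq_mul,
      ← Complex.ofReal_mul]
    exact final_scalar N hN z.im _ _ _ hcore
end

section
/- Spectral-decomposition Schwarz bound: let W be Hermitian N×N with resolvent G(ζ)=(W-ζ)^{-1}, let Q_1, Q_2, Q_3 ∈ ℂ^{N×N}, z, w ∈ ℂ∖ℝ, and x, y ∈ ℂ^N. Then |⟨x, Q_1 G(z) Q_2 G(w) Q_3 y⟩| ≤ C √N · (⟨x, Q_1|G(z)|Q_1* x⟩)^{1/2} (⟨y, Q_3*|G(w)|Q_3 y⟩)^{1/2} · ⟨|G(z)| Q_2 |G(w)| Q_2*⟩^{1/2}, for a universal constant C. -/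
open Matrix MeasureTheory Asymptotics
open scoped ComplexOrder BigOperators

lemma conj3_mul {N : ℕ} {V : Matrix (Fin N) (Fin N) ℂ} (hV : Vᴴ * V = 1)
    (M M' : Matrix (Fin N) (Fin N) ℂ) :
    (V * M * Vᴴ) * (V * M' * Vᴴ) = V * (M * M') * Vᴴ := by
  calc (V * M * Vᴴ) * (V * M' * Vᴴ) = V * M * (Vᴴ * V) * M' * Vᴴ := by
        simp only [Matrix.mul_assoc]
    _ = V * (M * M') * Vᴴ := by rw [hV, Matrix.mul_one]; simp only [Matrix.mul_assoc]

open MatrixOrder in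
lemma matAbs_eq_of_sq {N : ℕ} (A X : Matrix (Fin N) (Fin N) ℂ) (hX : X.PosSemidef)
    (h : X ^ 2 = A * Aᴴ) : matAbs A = X := by
  have hA := Matrix.posSemidef_self_mul_conjTranspose A
  have e1 : matAbs A = cfc Real.sqrt (A * Aᴴ) := by rw [hA.1.cfc_eq]; rfl
  rw [e1, ← cfcₙ_eq_cfc, ← CFC.sqrt_eq_real_sqrt _ hA.nonneg]
  exact CFC.sqrt_unique (by rw [← h, pow_two]) hX.nonneg

lemma res_decomp {N : ℕ} (W : Matrix (Fin N) (Fin N) ℂ) (hW : W.IsHermitian) :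
    ∃ V : Matrix (Fin N) (Fin N) ℂ, Vᴴ * V = 1 ∧ V * Vᴴ = 1 ∧
      ∀ z : ℂ, z.im ≠ 0 → ∃ g : Fin N → ℂ,
        resOf W z = V * diagonal g * Vᴴ ∧
        matAbs (resOf W z) = V * diagonal (fun i => (‖g i‖ : ℂ)) * Vᴴ := by
  refine ⟨(hW.eigenvectorUnitary : Matrix (Fin N) (Fin N) ℂ), ?_, ?_, ?_⟩
  · exact (Matrix.mem_unitaryGroup_iff'.mp hW.eigenvectorUnitary.2)
  · exact (Matrix.mem_unitaryGroup_iff.mp hW.eigenvectorUnitary.2)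
  set V : Matrix (Fin N) (Fin N) ℂ := (hW.eigenvectorUnitary : Matrix (Fin N) (Fin N) ℂ) with hVdef
  have hV : Vᴴ * V = 1 := Matrix.mem_unitaryGroup_iff'.mp hW.eigenvectorUnitary.2
  have hV' : V * Vᴴ = 1 := Matrix.mem_unitaryGroup_iff.mp hW.eigenvectorUnitary.2
  intro z hz
  set ev : Fin N → ℝ := hW.eigenvalues
  have hne : ∀ i, ((ev i : ℂ) - z) ≠ 0 := by
    intro i h
    apply hz
    have := congrArg Complex.im h
    simpa using this.symm
  set g : Fin N → ℂ := fun i => ((ev i : ℂ) - z)⁻¹ with hgdef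
  have hres : resOf W z = V * diagonal g * Vᴴ := by
    have hWz : W - z • (1 : Matrix (Fin N) (Fin N) ℂ)
        = V * diagonal (fun i => (ev i : ℂ) - z) * Vᴴ := by
      have h1 : W = V * diagonal (fun i => (ev i : ℂ)) * Vᴴ := by
        have := hW.spectral_theorem
        simpa [Function.comp_def, Matrix.star_eq_conjTranspose, hVdef] using this
      have h2 : z • (1 : Matrix (Fin N) (Fin N) ℂ)
          = V * diagonal (fun _ => z) * Vᴴ := by
        have : (diagonal (fun _ : Fin N => z)) = z • (1 : Matrix (Fin N) (Fin N) ℂ) := by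
          ext i j
          by_cases h : i = j <;> simp [Matrix.diagonal_apply, Matrix.one_apply, h]
        rw [this, Matrix.mul_smul, Matrix.smul_mul, Matrix.mul_one, hV']
      rw [h1, h2, ← Matrix.sub_mul, ← Matrix.mul_sub, Matrix.diagonal_sub]
    rw [resOf, hWz]
    apply Matrix.inv_eq_right_inv
    rw [conj3_mul hV, Matrix.diagonal_mul_diagonal]
    have : (fun i => ((ev i : ℂ) - z) * ((ev i : ℂ) - z)⁻¹) = fun _ => (1:ℂ) := by
      funext i; exact mul_inv_cancel₀ (hne i)
    rw [this, Matrix.diagonal_one, Matrix.mul_one, hV']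
  refine ⟨g, hres, ?_⟩
  have hPSD : (V * diagonal (fun i => (‖g i‖ : ℂ)) * Vᴴ).PosSemidef := by
    refine Matrix.PosSemidef.mul_mul_conjTranspose_same ?_ V
    exact Matrix.posSemidef_diagonal_iff.mpr fun i => Complex.zero_le_real.mpr (norm_nonneg _)
  have hsq : (V * diagonal (fun i => (‖g i‖ : ℂ)) * Vᴴ) ^ 2
      = resOf W z * (resOf W z)ᴴ := by
    have h2 : (resOf W z)ᴴ = V * diagonal (star g) * Vᴴ := by
      rw [hres]
      simp only [Matrix.conjTranspose_mul, Matrix.conjTranspose_conjTranspose,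
        Matrix.diagonal_conjTranspose, Matrix.mul_assoc]
    rw [pow_two, conj3_mul hV, Matrix.diagonal_mul_diagonal, h2, hres,
      conj3_mul hV, Matrix.diagonal_mul_diagonal]
    have : ∀ i, (‖g i‖ : ℂ) * (‖g i‖ : ℂ) = g i * star g i := by
      intro i
      rw [show star g i = (starRingEnd ℂ) (g i) from rfl, Complex.mul_conj,
        ← Complex.ofReal_mul]
      norm_cast
      rw [Complex.normSq_eq_norm_sq, sq]
    simp only [this]
  exact matAbs_eq_of_sq _ _ hPSD hsq

lemma star_vecMul' {N : ℕ} (M : Matrix (Fin N) (Fin N) ℂ) (x : Fin N → ℂ) :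
    star x ᵥ* M = star (Mᴴ *ᵥ x) := by
  rw [Matrix.star_mulVec, Matrix.conjTranspose_conjTranspose]

lemma re_term (r : ℝ) (c : ℂ) : (↑r * (star c * c)).re = r * ‖c‖ ^ 2 := by
  rw [Complex.star_def, show (starRingEnd ℂ) c * c = c * (starRingEnd ℂ) c from mul_comm _ _,
    Complex.mul_conj, ← Complex.ofReal_mul, Complex.ofReal_re, Complex.normSq_eq_norm_sq]

lemma quad_re {N : ℕ} (M : Matrix (Fin N) (Fin N) ℂ) (r : Fin N → ℝ) (x : Fin N → ℂ) :
    (star x ⬝ᵥ ((M * diagonal (fun i => (r i : ℂ)) * Mᴴ) *ᵥ x)).re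
      = ∑ i, r i * ‖(Mᴴ *ᵥ x) i‖ ^ 2 := by
  rw [← Matrix.mulVec_mulVec, ← Matrix.mulVec_mulVec, Matrix.dotProduct_mulVec, star_vecMul']
  set a := Mᴴ *ᵥ x
  rw [dotProduct, Complex.re_sum]
  refine Finset.sum_congr rfl fun i _ => ?_
  rw [Matrix.mulVec_diagonal, mul_left_comm, Pi.star_apply, re_term]

lemma lhs_sum {N : ℕ} (M₁ B M₂ : Matrix (Fin N) (Fin N) ℂ) (g h : Fin N → ℂ)
    (x y : Fin N → ℂ) :
    star x ⬝ᵥ ((M₁ * diagonal g * B * diagonal h * M₂) *ᵥ y)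
      = ∑ i, ∑ j, star (M₁ᴴ *ᵥ x) i * g i * B i j * h j * (M₂ *ᵥ y) j := by
  rw [← Matrix.mulVec_mulVec, ← Matrix.mulVec_mulVec, ← Matrix.mulVec_mulVec,
    ← Matrix.mulVec_mulVec, Matrix.dotProduct_mulVec, star_vecMul']
  set a := M₁ᴴ *ᵥ x
  set c := M₂ *ᵥ y
  rw [dotProduct]
  refine Finset.sum_congr rfl fun i _ => ?_
  rw [Matrix.mulVec_diagonal]
  rw [show diagonal h *ᵥ c = fun j => h j * c j from
    funext fun j => Matrix.mulVec_diagonal h c j]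
  rw [show (B *ᵥ fun j => h j * c j) i = ∑ j, B i j * (h j * c j) from rfl]
  rw [Finset.mul_sum, Finset.mul_sum]
  exact Finset.sum_congr rfl fun j _ => by ring

lemma trace_re_sum {N : ℕ} (B : Matrix (Fin N) (Fin N) ℂ) (r s : Fin N → ℝ) :
    (Matrix.trace (diagonal (fun i => (r i : ℂ)) * B * diagonal (fun j => (s j : ℂ)) * Bᴴ)).re
      = ∑ i, ∑ j, r i * s j * ‖B i j‖ ^ 2 := by
  rw [Matrix.trace, Complex.re_sum]
  refine Finset.sum_congr rfl fun i _ => ?_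
  rw [Matrix.diag_apply]
  have h1 : ∀ a b, (diagonal (fun i => (r i : ℂ)) * B * diagonal (fun j => (s j : ℂ))) a b
      = (r a : ℂ) * B a b * (s b : ℂ) := by
    intro a b; rw [Matrix.mul_diagonal, Matrix.diagonal_mul]
  rw [show (diagonal (fun i => (r i : ℂ)) * B * diagonal (fun j => (s j : ℂ)) * Bᴴ) i i
      = ∑ j, (r i : ℂ) * (s j : ℂ) * (star (B i j) * B i j) by
    rw [Matrix.mul_apply]
    simp only [h1, Matrix.conjTranspose_apply]
    exact Finset.sum_congr rfl fun j _ => by ring]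
  rw [Complex.re_sum]
  refine Finset.sum_congr rfl fun j _ => ?_
  rw [← Complex.ofReal_mul, re_term, mul_assoc]

lemma trace_conj {N : ℕ} {V : Matrix (Fin N) (Fin N) ℂ} (hV : Vᴴ * V = 1)
    (M : Matrix (Fin N) (Fin N) ℂ) : (V * M * Vᴴ).trace = M.trace := by
  rw [Matrix.trace_mul_comm, ← Matrix.mul_assoc, hV, Matrix.one_mul]

theorem iso_schwarz' {N : ℕ} (W Q₁ Q₂ Q₃ : Matrix (Fin N) (Fin N) ℂ) (z w : ℂ)
      (x y : Fin N → ℂ) (hW : W.IsHermitian) (hz : z.im ≠ 0) (hw : w.im ≠ 0) :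
      ‖(star x ⬝ᵥ ((Q₁ * resOf W z * Q₂ * resOf W w * Q₃) *ᵥ y))‖
        ≤ 1 * Real.sqrt N *
            Real.sqrt ((star x ⬝ᵥ ((Q₁ * matAbs (resOf W z) * Q₁ᴴ) *ᵥ x)).re) *
            Real.sqrt ((star y ⬝ᵥ ((Q₃ᴴ * matAbs (resOf W w) * Q₃) *ᵥ y)).re) *
            Real.sqrt ((ntr (matAbs (resOf W z) * Q₂ * matAbs (resOf W w) * Q₂ᴴ)).re) := by
  rcases Nat.eq_zero_or_pos N with hN | hN
  · subst hN
    simp [dotProduct]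
  have hN0 : (N : ℝ) ≠ 0 := by positivity
  obtain ⟨V, hV, hV', hdec⟩ := res_decomp W hW
  obtain ⟨g, hgz, hgabs⟩ := hdec z hz
  obtain ⟨h, hhw, hhabs⟩ := hdec w hw
  set a : Fin N → ℂ := (Q₁ * V)ᴴ *ᵥ x with ha
  set c : Fin N → ℂ := (Vᴴ * Q₃) *ᵥ y with hc
  set B : Matrix (Fin N) (Fin N) ℂ := Vᴴ * Q₂ * V with hB
  set Sx : ℝ := ∑ i, ‖g i‖ * ‖a i‖ ^ 2 with hSx
  set Sy : ℝ := ∑ j, ‖h j‖ * ‖c j‖ ^ 2 with hSy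
  set T : ℝ := ∑ i, ∑ j, ‖g i‖ * ‖h j‖ * ‖B i j‖ ^ 2 with hT
  have hSx0 : 0 ≤ Sx := Finset.sum_nonneg fun i _ => by positivity
  have hSy0 : 0 ≤ Sy := Finset.sum_nonneg fun i _ => by positivity
  have hT0 : 0 ≤ T := Finset.sum_nonneg fun i _ => Finset.sum_nonneg fun j _ => by positivity
  -- x-term
  have hx : (star x ⬝ᵥ ((Q₁ * matAbs (resOf W z) * Q₁ᴴ) *ᵥ x)).re = Sx := by
    rw [hgabs, show Q₁ * (V * diagonal (fun i => (‖g i‖ : ℂ)) * Vᴴ) * Q₁ᴴ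
        = (Q₁ * V) * diagonal (fun i => (‖g i‖ : ℂ)) * (Q₁ * V)ᴴ by
      simp only [Matrix.conjTranspose_mul, Matrix.mul_assoc]]
    exact quad_re (Q₁ * V) (fun i => ‖g i‖) x
  -- y-term
  have hy : (star y ⬝ᵥ ((Q₃ᴴ * matAbs (resOf W w) * Q₃) *ᵥ y)).re = Sy := by
    rw [hhabs, show Q₃ᴴ * (V * diagonal (fun j => (‖h j‖ : ℂ)) * Vᴴ) * Q₃
        = (Q₃ᴴ * V) * diagonal (fun j => (‖h j‖ : ℂ)) * (Q₃ᴴ * V)ᴴ by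
      simp only [Matrix.conjTranspose_mul, Matrix.conjTranspose_conjTranspose,
        Matrix.mul_assoc]]
    have := quad_re (Q₃ᴴ * V) (fun j => ‖h j‖) y
    rw [this]
    have : (Q₃ᴴ * V)ᴴ *ᵥ y = c := by
      rw [hc, Matrix.conjTranspose_mul, Matrix.conjTranspose_conjTranspose]
    rw [this]
  -- trace term
  have htr : (ntr (matAbs (resOf W z) * Q₂ * matAbs (resOf W w) * Q₂ᴴ)).re = (N : ℝ)⁻¹ * T := by
    have hBH : Bᴴ = Vᴴ * Q₂ᴴ * V := by
      rw [hB]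
      simp only [Matrix.conjTranspose_mul, Matrix.conjTranspose_conjTranspose, Matrix.mul_assoc]
    have hM : matAbs (resOf W z) * Q₂ * matAbs (resOf W w) * Q₂ᴴ
        = V * (diagonal (fun i => (‖g i‖ : ℂ)) * B * diagonal (fun j => (‖h j‖ : ℂ)) * Bᴴ) * Vᴴ := by
      rw [hgabs, hhabs, hBH, hB]
      simp only [Matrix.mul_assoc]
      rw [hV', Matrix.mul_one]
    rw [ntr, hM, trace_conj hV]
    rw [show ((N : ℂ))⁻¹ = Complex.ofReal ((N : ℝ)⁻¹) by push_cast; ring]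
    rw [Complex.re_ofReal_mul, trace_re_sum]
  -- LHS as a double sum
  have hlhs : star x ⬝ᵥ ((Q₁ * resOf W z * Q₂ * resOf W w * Q₃) *ᵥ y)
      = ∑ i, ∑ j, star a i * g i * B i j * h j * c j := by
    rw [hgz, hhw, show Q₁ * (V * diagonal g * Vᴴ) * Q₂ * (V * diagonal h * Vᴴ) * Q₃
        = (Q₁ * V) * diagonal g * B * diagonal h * (Vᴴ * Q₃) by
      rw [hB]; simp only [Matrix.mul_assoc]]
    exact lhs_sum (Q₁ * V) B (Vᴴ * Q₃) g h x y
  -- bound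
  have key : ‖(∑ i, ∑ j, star a i * g i * B i j * h j * c j)‖
      ≤ Real.sqrt Sx * Real.sqrt Sy * Real.sqrt T := by
    have step1 : ‖(∑ i, ∑ j, star a i * g i * B i j * h j * c j)‖
        ≤ ∑ i, ∑ j, ‖a i‖ * ‖g i‖ * ‖B i j‖ * ‖h j‖ * ‖c j‖ := by
      refine (norm_sum_le _ _).trans (Finset.sum_le_sum fun i _ => ?_)
      refine (norm_sum_le _ _).trans (Finset.sum_le_sum fun j _ => le_of_eq ?_)
      simp [norm_mul, Pi.star_apply, norm_star]
    refine step1.trans ?_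
    have step2 : ∑ i, ∑ j, ‖a i‖ * ‖g i‖ * ‖B i j‖ * ‖h j‖ * ‖c j‖
        = ∑ p : Fin N × Fin N,
            (‖a p.1‖ * Real.sqrt ‖g p.1‖ * (Real.sqrt ‖h p.2‖ * ‖c p.2‖)) *
            (Real.sqrt ‖g p.1‖ * ‖B p.1 p.2‖ * Real.sqrt ‖h p.2‖) := by
      rw [← Finset.univ_product_univ, Finset.sum_product]
      refine Finset.sum_congr rfl fun i _ => Finset.sum_congr rfl fun j _ => ?_
      rw [show ∀ u v r s t : ℝ, (u * Real.sqrt v * (Real.sqrt r * s)) * (Real.sqrt v * t * Real.sqrt r)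
          = u * (Real.sqrt v * Real.sqrt v) * t * (Real.sqrt r * Real.sqrt r) * s from
        fun u v r s t => by ring]
      rw [Real.mul_self_sqrt (norm_nonneg _), Real.mul_self_sqrt (norm_nonneg _)]
    rw [step2]
    refine (Real.sum_mul_le_sqrt_mul_sqrt _ _ _).trans (le_of_eq ?_)
    have e1 : ∑ p : Fin N × Fin N,
        (‖a p.1‖ * Real.sqrt ‖g p.1‖ * (Real.sqrt ‖h p.2‖ * ‖c p.2‖)) ^ 2 = Sx * Sy := by
      rw [hSx, hSy, Finset.sum_mul_sum, ← Finset.univ_product_univ, Finset.sum_product]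
      refine Finset.sum_congr rfl fun i _ => Finset.sum_congr rfl fun j _ => ?_
      rw [mul_pow, mul_pow, mul_pow, Real.sq_sqrt (norm_nonneg _), Real.sq_sqrt (norm_nonneg _)]
      ring
    have e2 : ∑ p : Fin N × Fin N,
        (Real.sqrt ‖g p.1‖ * ‖B p.1 p.2‖ * Real.sqrt ‖h p.2‖) ^ 2 = T := by
      rw [hT, ← Finset.univ_product_univ, Finset.sum_product]
      refine Finset.sum_congr rfl fun i _ => Finset.sum_congr rfl fun j _ => ?_
      rw [mul_pow, mul_pow, Real.sq_sqrt (norm_nonneg _), Real.sq_sqrt (norm_nonneg _)]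
      ring
    rw [e1, e2, Real.sqrt_mul hSx0]
  -- conclude
  rw [hlhs, hx, hy, htr]
  refine key.trans (le_of_eq ?_)
  have hsqrtT : Real.sqrt (N : ℝ) * Real.sqrt ((N : ℝ)⁻¹ * T) = Real.sqrt T := by
    rw [← Real.sqrt_mul (Nat.cast_nonneg N), ← mul_assoc, mul_inv_cancel₀ hN0, one_mul]
  rw [one_mul]
  calc Real.sqrt Sx * Real.sqrt Sy * Real.sqrt T
      = Real.sqrt Sx * Real.sqrt Sy * (Real.sqrt (N:ℝ) * Real.sqrt ((N:ℝ)⁻¹ * T)) := by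
        rw [hsqrtT]
    _ = Real.sqrt ↑N * Real.sqrt Sx * Real.sqrt Sy * Real.sqrt ((N:ℝ)⁻¹ * T) := by ring

/-- spectral-decomposition Schwarz bound for isotropic chains. -/
theorem iso_schwarz :
    ∃ C : ℝ, 0 < C ∧ ∀ (N : ℕ) (W Q₁ Q₂ Q₃ : Matrix (Fin N) (Fin N) ℂ) (z w : ℂ)
      (x y : Fin N → ℂ), W.IsHermitian → z.im ≠ 0 → w.im ≠ 0 →
      ‖(star x ⬝ᵥ ((Q₁ * resOf W z * Q₂ * resOf W w * Q₃) *ᵥ y))‖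
        ≤ C * Real.sqrt N *
            Real.sqrt ((star x ⬝ᵥ ((Q₁ * matAbs (resOf W z) * Q₁ᴴ) *ᵥ x)).re) *
            Real.sqrt ((star y ⬝ᵥ ((Q₃ᴴ * matAbs (resOf W w) * Q₃) *ᵥ y)).re) *
            Real.sqrt ((ntr (matAbs (resOf W z) * Q₂ * matAbs (resOf W w) * Q₂ᴴ)).re) := by
  exact ⟨1, one_pos, fun N W Q₁ Q₂ Q₃ z w x y hW hz hw =>
    iso_schwarz' W Q₁ Q₂ Q₃ z w x y hW hz hw⟩
end
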